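/- For every z > 0, G is differentiable at z with G′(z) = ((√(κμ) − 1)²/(κ−1)) · (z − ψ)² / (z(z + qκ)(z + q)). In particular ψ is a critical point of G with G′(ψ) = 0 and G″(ψ) = 0. -/

import Mathlib

/-- The steepest-descent phase function
`G(z) = μ log(κ⁻¹z + q) − log(z + q) + g(μ) log z` is differentiable on `(0,∞)` with
`G′(z) = ((√(κμ) − 1)²/(κ−1)) (z − ψ)²/(z(z+qκ)(z+q))`; in particular
`G′(ψ) = 0` and `G″(ψ) = 0`. -/
theorem stmt10 (κ q μ : ℝ) (hκ : 1 < κ) (hq0 : 0 < q) (hq1 : q < 1)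
    (hμ1 : κ⁻¹ < μ) (hμ2 : μ < κ) :
    let gμ : ℝ := (Real.sqrt μ - Real.sqrt κ) ^ 2 / (κ - 1)
    let ψ : ℝ := q * (κ - Real.sqrt (κ * μ)) / (Real.sqrt (κ * μ) - 1)
    let G : ℝ → ℝ := fun z =>
      μ * Real.log (κ⁻¹ * z + q) - Real.log (z + q) + gμ * Real.log z
    (∀ z : ℝ, 0 < z →
      HasDerivAt G
        ((Real.sqrt (κ * μ) - 1) ^ 2 / (κ - 1) * (z - ψ) ^ 2 /
          (z * (z + q * κ) * (z + q))) z) ∧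
    deriv G ψ = 0 ∧ deriv (deriv G) ψ = 0 := by
  have hκ0 : (0:ℝ) < κ := lt_trans one_pos hκ
  have hμ0 : (0:ℝ) < μ := lt_trans (inv_pos.mpr hκ0) hμ1
  set s := Real.sqrt (κ * μ) with hsdef
  have hs2 : s ^ 2 = κ * μ := Real.sq_sqrt (by positivity)
  have hκμ1 : (1:ℝ) < κ * μ := by
    calc (1:ℝ) = κ * κ⁻¹ := (mul_inv_cancel₀ (ne_of_gt hκ0)).symm
    _ < κ * μ := by exact mul_lt_mul_of_pos_left hμ1 hκ0
  have hs1 : 1 < s := by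
    rw [hsdef]
    have := Real.lt_sqrt (x := 1) (y := κ * μ) (by norm_num)
    rw [this]
    nlinarith
  have hsκ : s < κ := by
    rw [hsdef]
    rw [show Real.sqrt (κ * μ) < κ ↔ κ * μ < κ ^ 2 from Real.sqrt_lt' hκ0]
    nlinarith
  intro gμ ψ G
  have hgdef : gμ = (Real.sqrt μ - Real.sqrt κ) ^ 2 / (κ - 1) := rfl
  have hψdef : ψ = q * (κ - s) / (s - 1) := rfl
  have hGdef : G = fun z =>
      μ * Real.log (κ⁻¹ * z + q) - Real.log (z + q) + gμ * Real.log z := rfl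
  have hμeq : μ = s ^ 2 / κ := by rw [hs2]; field_simp
  have h1 : Real.sqrt μ * Real.sqrt κ = s := by
    rw [hsdef, mul_comm κ μ, Real.sqrt_mul hμ0.le]
  have h2 : Real.sqrt μ ^ 2 = μ := Real.sq_sqrt hμ0.le
  have h3 : Real.sqrt κ ^ 2 = κ := Real.sq_sqrt hκ0.le
  have hg2 : gμ = (μ + κ - 2 * s) / (κ - 1) := by
    rw [hgdef]
    congr 1
    linear_combination h2 + h3 - 2 * h1
  have hκ1 : κ - 1 ≠ 0 := by intro h; nlinarith
  have hs1' : s - 1 ≠ 0 := by intro h; nlinarith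
  have hψpos : 0 < ψ := by
    rw [hψdef]
    exact div_pos (mul_pos hq0 (sub_pos.mpr hsκ)) (sub_pos.mpr hs1)
  have key : ∀ z : ℝ, 0 < z →
      HasDerivAt G
        ((s - 1) ^ 2 / (κ - 1) * (z - ψ) ^ 2 /
          (z * (z + q * κ) * (z + q))) z := by
    intro z hz
    have ha : κ⁻¹ * z + q ≠ 0 := by positivity
    have hb : z + q ≠ 0 := by positivity
    have hbκ : z + q * κ ≠ 0 := by positivity
    have hA : HasDerivAt (fun x : ℝ => κ⁻¹ * x + q) κ⁻¹ z := by
      simpa using ((hasDerivAt_id z).const_mul κ⁻¹).add_const q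
    have hB : HasDerivAt (fun x : ℝ => x + q) 1 z := (hasDerivAt_id z).add_const q
    have hG : HasDerivAt G
        (μ * (κ⁻¹ / (κ⁻¹ * z + q)) - 1 / (z + q) + gμ * z⁻¹) z := by
      rw [hGdef]
      exact (((hA.log ha).const_mul μ).sub (hB.log hb)).add
        ((Real.hasDerivAt_log hz.ne').const_mul gμ)
    convert hG using 1
    rw [hg2, hψdef, hμeq]
    field_simp
    ring
  refine ⟨key, ?_, ?_⟩
  · rw [(key ψ hψpos).deriv]
    simp
  · set F : ℝ → ℝ := fun z =>
      (s - 1) ^ 2 / (κ - 1) * (z - ψ) ^ 2 / (z * (z + q * κ) * (z + q)) with hF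
    have hmem : Set.Ioi (0:ℝ) ∈ nhds ψ := isOpen_Ioi.mem_nhds hψpos
    have hEq : deriv G =ᶠ[nhds ψ] F :=
      Filter.eventuallyEq_of_mem hmem fun z hz => (key z hz).deriv
    rw [hEq.deriv_eq]
    have hne : ψ * (ψ + q * κ) * (ψ + q) ≠ 0 := by positivity
    have hnum : HasDerivAt (fun z : ℝ => (s - 1) ^ 2 / (κ - 1) * (z - ψ) ^ 2) 0 ψ := by
      have := (((hasDerivAt_id ψ).sub_const ψ).pow 2).const_mul ((s - 1) ^ 2 / (κ - 1))
      simpa using this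
    have hden : HasDerivAt (fun z : ℝ => z * (z + q * κ) * (z + q))
        ((1 * (ψ + q * κ) + ψ * 1) * (ψ + q) + ψ * (ψ + q * κ) * 1) ψ :=
      (((hasDerivAt_id ψ).mul ((hasDerivAt_id ψ).add_const (q * κ))).mul
        ((hasDerivAt_id ψ).add_const q))
    have hFd : HasDerivAt F _ ψ := hnum.div hden hne
    rw [hFd.deriv]
    simp
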